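/- arXiv:1806.04277 — 2 statements merged into one kernel-verified Lean document; each statement's English description precedes it below -/
import Mathlib

section
/- For all strings S, T and every character c, the delete–insert edit distance satisfies d_DI(S ++ [c], T ++ [c]) = d_DI(S, T). -/
/-- `StepsIn R k S T` holds if there is a sequence of exactly `k` steps of the
relation `R` transforming `S` into `T`. -/
def StepsIn {α : Type*} (R : List α → List α → Prop) : ℕ → List α → List α → Prop
  | 0, S, T => S = T
  | n + 1, S, T => ∃ M, R S M ∧ StepsIn R n M T

/-- A single delete or insert operation on a string. -/
inductive DIStep {α : Type*} : List α → List α → Prop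
  | del (U V : List α) (c : α) : DIStep (U ++ [c] ++ V) (U ++ V)
  | ins (U V : List α) (c : α) : DIStep (U ++ V) (U ++ [c] ++ V)

/-- The delete–insert edit distance: the minimum number of single-character
deletions and insertions transforming `S` into `T`. -/
noncomputable def dDI {α : Type*} (S T : List α) : ℕ :=
  sInf {n | StepsIn DIStep n S T}

/-- The length of a longest common subsequence of `S` and `T`. -/
noncomputable def lcss {α : Type*} (S T : List α) : ℕ :=
  sSup {n | ∃ L : List α, L.Sublist S ∧ L.Sublist T ∧ L.length = n}

section Aux

variable {α : Type*}

open List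

lemma stepsIn_trans {R : List α → List α → Prop} :
    ∀ {m n : ℕ} {S M T : List α}, StepsIn R m S M → StepsIn R n M T →
      StepsIn R (m + n) S T := by
  intro m
  induction m with
  | zero => intro n S M T h1 h2; cases h1; simpa using h2
  | succ k ih =>
    intro n S M T h1 h2
    obtain ⟨N, hN, hrest⟩ := h1
    have hk : k + 1 + n = (k + n) + 1 := by omega
    rw [hk]
    exact ⟨N, hN, ih hrest h2⟩

lemma diStep_cons {a : α} {S T : List α} (h : DIStep S T) : DIStep (a :: S) (a :: T) := by
  cases h with
  | del U V c => exact DIStep.del (a :: U) V c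
  | ins U V c => exact DIStep.ins (a :: U) V c

lemma stepsIn_cons {a : α} : ∀ {n : ℕ} {S T : List α},
    StepsIn DIStep n S T → StepsIn DIStep n (a :: S) (a :: T) := by
  intro n
  induction n with
  | zero => intro S T h; cases h; rfl
  | succ k ih =>
    intro S T h
    obtain ⟨M, hM, hrest⟩ := h
    exact ⟨a :: M, diStep_cons hM, ih hrest⟩

lemma diStep_symm {S T : List α} (h : DIStep S T) : DIStep T S := by
  cases h with
  | del U V c => exact DIStep.ins U V c
  | ins U V c => exact DIStep.del U V c

lemma stepsIn_symm : ∀ {n : ℕ} {S T : List α},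
    StepsIn DIStep n S T → StepsIn DIStep n T S := by
  intro n
  induction n with
  | zero => intro S T h; cases h; rfl
  | succ k ih =>
    intro S T h
    obtain ⟨M, hM, hrest⟩ := h
    have : StepsIn DIStep (k + 1) T S := stepsIn_trans (ih hrest) ⟨S, diStep_symm hM, rfl⟩
    exact this

/-- Deleting characters: from `S` down to a sublist `L`. -/
lemma stepsIn_of_sublist {L S : List α} (h : L <+ S) :
    StepsIn DIStep (S.length - L.length) S L := by
  induction h with
  | slnil => exact rfl
  | cons a h ih =>
    rename_i l s
    have hlen : l.length ≤ s.length := h.length_le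
    have : (a :: s).length - l.length = (s.length - l.length) + 1 := by
      simp; omega
    rw [this]
    have hstep : DIStep (a :: s) s := by
      have := DIStep.del ([] : List α) s a
      simpa using this
    rw [Nat.add_comm]
    exact stepsIn_trans (show StepsIn DIStep 1 (a :: s) s from ⟨s, hstep, rfl⟩) ih
  | cons_cons a h ih =>
    rename_i l s
    have : (a :: s).length - (a :: l).length = s.length - l.length := by simp
    rw [this]
    exact stepsIn_cons ih

/-! ### lcss facts -/

lemma lcss_bddAbove (S T : List α) :
    BddAbove {n | ∃ L : List α, L.Sublist S ∧ L.Sublist T ∧ L.length = n} := by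
  refine ⟨S.length, ?_⟩
  rintro n ⟨L, hS, _, rfl⟩
  exact hS.length_le

lemma lcss_nonempty (S T : List α) :
    {n | ∃ L : List α, L.Sublist S ∧ L.Sublist T ∧ L.length = n}.Nonempty :=
  ⟨0, [], nil_sublist _, nil_sublist _, rfl⟩

lemma lcss_spec (S T : List α) :
    ∃ L : List α, L.Sublist S ∧ L.Sublist T ∧ L.length = lcss S T :=
  Nat.sSup_mem (lcss_nonempty S T) (lcss_bddAbove S T)

lemma le_lcss {L S T : List α} (hS : L <+ S) (hT : L <+ T) : L.length ≤ lcss S T :=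
  le_csSup (lcss_bddAbove S T) ⟨L, hS, hT, rfl⟩

lemma lcss_self (T : List α) : lcss T T = T.length := by
  have h1 : T.length ≤ lcss T T := le_lcss (Sublist.refl T) (Sublist.refl T)
  have h2 : lcss T T ≤ T.length := by
    obtain ⟨L, hS, _, hlen⟩ := lcss_spec T T
    rw [← hlen]; exact hS.length_le
  omega

lemma sublist_append_middle (U V : List α) (c : α) : U ++ V <+ U ++ [c] ++ V := by
  have := List.Sublist.append (List.Sublist.refl U) (List.sublist_cons_self c V)
  simpa [List.append_assoc] using this

lemma lcss_del_le {U V T : List α} {c : α} : lcss (U ++ V) T ≤ lcss (U ++ [c] ++ V) T := by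
  obtain ⟨L, hS, hT, hlen⟩ := lcss_spec (U ++ V) T
  rw [← hlen]
  exact le_lcss (hS.trans (sublist_append_middle U V c)) hT

lemma lcss_ins_le {U V T : List α} {c : α} :
    lcss (U ++ [c] ++ V) T ≤ lcss (U ++ V) T + 1 := by
  obtain ⟨L, hS, hT, hlen⟩ := lcss_spec (U ++ [c] ++ V) T
  rw [← hlen]
  rw [List.append_assoc, sublist_append_iff] at hS
  obtain ⟨L₁, L₂, rfl, h₁, h₂⟩ := hS
  cases h₂ with
  | cons a h₂' =>
    -- L₂ <+ V
    have hLV : L₁ ++ L₂ <+ U ++ V := h₁.append h₂'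
    exact (le_lcss hLV hT).trans (Nat.le_succ _)
  | cons_cons a h₂' =>
    rename_i L₂'
    -- L₂ = c :: L₂', L₂' <+ V
    have hLV : L₁ ++ L₂' <+ U ++ V := h₁.append h₂'
    have hLT : L₁ ++ L₂' <+ T :=
      (Sublist.append (Sublist.refl L₁) (sublist_cons_self c L₂')).trans hT
    have : (L₁ ++ L₂').length ≤ lcss (U ++ V) T := le_lcss hLV hLT
    simp only [List.length_append, List.length_cons] at this ⊢
    omega

/-- One step changes the potential by at most one. -/
lemma step_potential {M N T : List α} (h : DIStep M N) :
    M.length + 2 * lcss N T ≤ N.length + 2 * lcss M T + 1 := by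
  cases h with
  | del U V c =>
    have h1 : lcss (U ++ V) T ≤ lcss (U ++ [c] ++ V) T := lcss_del_le
    simp only [List.length_append, List.length_cons, List.length_nil]
    omega
  | ins U V c =>
    have h1 : lcss (U ++ [c] ++ V) T ≤ lcss (U ++ V) T + 1 := lcss_ins_le
    simp only [List.length_append, List.length_cons, List.length_nil]
    omega

lemma stepsIn_lower : ∀ {k : ℕ} {M T : List α}, StepsIn DIStep k M T →
    M.length + 2 * lcss T T ≤ k + T.length + 2 * lcss M T := by
  intro k
  induction k with
  | zero => intro M T h; cases h; omega
  | succ n ih =>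
    intro M T h
    obtain ⟨N, hN, hrest⟩ := h
    have h1 := ih hrest
    have h2 := step_potential (T := T) hN
    omega

lemma dDI_add_lcss (S T : List α) : dDI S T + 2 * lcss S T = S.length + T.length := by
  obtain ⟨L, hS, hT, hlen⟩ := lcss_spec S T
  -- upper bound: delete S down to L, then insert up to T
  have hsteps : StepsIn DIStep ((S.length - L.length) + (T.length - L.length)) S T :=
    stepsIn_trans (stepsIn_of_sublist hS) (stepsIn_symm (stepsIn_of_sublist hT))
  have hne : {n | StepsIn DIStep n S T}.Nonempty := ⟨_, hsteps⟩
  have hmem : StepsIn DIStep (dDI S T) S T := Nat.sInf_mem hne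
  have hub : dDI S T ≤ (S.length - L.length) + (T.length - L.length) :=
    Nat.sInf_le hsteps
  have hlb := stepsIn_lower hmem
  rw [lcss_self] at hlb
  have hLS : L.length ≤ S.length := hS.length_le
  have hLT : L.length ≤ T.length := hT.length_le
  omega

lemma lcss_append_same (S T : List α) (c : α) :
    lcss (S ++ [c]) (T ++ [c]) = lcss S T + 1 := by
  obtain ⟨L, hS, hT, hlen⟩ := lcss_spec S T
  have h1 : lcss S T + 1 ≤ lcss (S ++ [c]) (T ++ [c]) := by
    have := le_lcss (L := L ++ [c]) (hS.append (Sublist.refl [c]))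
      (hT.append (Sublist.refl [c]))
    simpa [hlen] using this
  have h2 : lcss (S ++ [c]) (T ++ [c]) ≤ lcss S T + 1 := by
    obtain ⟨M, hMS, hMT, hMlen⟩ := lcss_spec (S ++ [c]) (T ++ [c])
    rw [← hMlen]
    -- decompose M w.r.t. S ++ [c]
    rw [sublist_append_iff] at hMS
    obtain ⟨M₁, M₂, rfl, hM₁, hM₂⟩ := hMS
    rcases sublist_singleton.1 hM₂ with rfl | rfl
    · -- M = M₁, M₁ <+ S
      simp only [List.append_nil] at hMT ⊢
      rw [sublist_append_iff] at hMT
      obtain ⟨N₁, N₂, hMeq, hN₁, hN₂⟩ := hMT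
      rcases sublist_singleton.1 hN₂ with rfl | rfl
      · simp only [List.append_nil] at hMeq
        subst hMeq
        exact (le_lcss hM₁ hN₁).trans (Nat.le_succ _)
      · -- M₁ = N₁ ++ [c], N₁ <+ T, and N₁ <+ M₁ <+ S
        subst hMeq
        have hN₁S : N₁ <+ S := (sublist_append_left N₁ [c]).trans hM₁
        have := le_lcss hN₁S hN₁
        simp only [List.length_append, List.length_cons, List.length_nil]
        omega
    · -- M = M₁ ++ [c], M₁ <+ S
      have hM₁T : M₁ ++ [c] <+ T ++ [c] := hMT
      have hM₁T' : M₁ <+ T := by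
        have h2 := hM₁T.reverse
        simp only [List.reverse_append, List.reverse_singleton,
          List.singleton_append] at h2
        have h3 := List.cons_sublist_cons.mp h2
        rwa [List.reverse_sublist] at h3
      have := le_lcss hM₁ hM₁T'
      simp only [List.length_append, List.length_cons, List.length_nil]
      omega
  omega

end Aux

theorem dDI_append_same {α : Type*} [DecidableEq α] (S T : List α) (c : α) :
    dDI (S ++ [c]) (T ++ [c]) = dDI S T := by
  have h1 := dDI_add_lcss (S ++ [c]) (T ++ [c])
  have h2 := dDI_add_lcss S T
  rw [lcss_append_same] at h1
  simp only [List.length_append, List.length_cons, List.length_nil] at h1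
  omega
end

section
/- Let S and T be strings and a, b characters with a ≠ b, such that b does not occur in S. Then the delete–replace edit distance satisfies d_DR(S ++ [a], T ++ [b]) = 1 + d_DR(S, T) (as elements of ℕ∞); that is, when the last character of the target occurs nowhere in the source, replacing the last character of the source by it is optimal. -/
set_option linter.unusedSectionVars false

/-- A single delete or replace operation on a string. -/
inductive DRStep {α : Type*} : List α → List α → Prop
  | del (U V : List α) (c : α) : DRStep (U ++ [c] ++ V) (U ++ V)
  | rep (U V : List α) (a b : α) (hab : a ≠ b) : DRStep (U ++ [a] ++ V) (U ++ [b] ++ V)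

/-- A single insert or replace operation on a string. -/
inductive IRStep {α : Type*} : List α → List α → Prop
  | ins (U V : List α) (c : α) : IRStep (U ++ V) (U ++ [c] ++ V)
  | rep (U V : List α) (a b : α) (hab : a ≠ b) : IRStep (U ++ [a] ++ V) (U ++ [b] ++ V)

/-- The delete–replace edit distance, as an extended natural number:
the minimum number of single-character deletions and replacements
transforming `S` into `T`, or `⊤` if no such sequence exists. -/
noncomputable def dDR {α : Type*} (S T : List α) : ℕ∞ :=
  sInf {n : ℕ∞ | ∃ k : ℕ, StepsIn DRStep k S T ∧ n = k}

/-- The insert–replace edit distance, as an extended natural number: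
the minimum number of single-character insertions and replacements
transforming `S` into `T`, or `⊤` if no such sequence exists. -/
noncomputable def dIR {α : Type*} (S T : List α) : ℕ∞ :=
  sInf {n : ℕ∞ | ∃ k : ℕ, StepsIn IRStep k S T ∧ n = k}

section Aux

variable {α : Type*} [DecidableEq α]

/-- Hamming-style mismatch count. -/
def ham : List α → List α → ℕ
  | [], _ => 0
  | _, [] => 0
  | a::s, b::t => (if a = b then 0 else 1) + ham s t

lemma ham_self : ∀ s : List α, ham s s = 0
  | [] => rfl
  | a::s => by simp [ham, ham_self s]

lemma ham_rep_le : ∀ (s₁ : List α) (T : List α) (s₂ : List α) (c d : α),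
    ham (s₁ ++ c :: s₂) T ≤ 1 + ham (s₁ ++ d :: s₂) T
  | s₁, [], s₂, c, d => by
      cases s₁ <;> simp [ham]
  | [], y::t, s₂, c, d => by
      simp only [List.nil_append, ham, List.append_eq]
      have h1 : (if c = y then 0 else 1) ≤ 1 := by split <;> omega
      omega
  | x::s₁, y::t, s₂, c, d => by
      simp only [List.cons_append, ham, List.append_eq]
      have := ham_rep_le s₁ t s₂ c d
      omega

lemma ham_append_singleton : ∀ (s t : List α), s.length = t.length → ∀ (x y : α),
    ham (s ++ [x]) (t ++ [y]) = ham s t + (if x = y then 0 else 1)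
  | [], [], _, x, y => by simp [ham]
  | [], b::t, h, x, y => by simp at h
  | a::s, [], h, x, y => by simp at h
  | a::s, b::t, h, x, y => by
      simp only [List.cons_append, ham, List.append_eq]
      rw [ham_append_singleton s t (by simpa using h) x y]
      omega

lemma StepsIn.trans {R : List α → List α → Prop} :
    ∀ {k j : ℕ} {S M T : List α}, StepsIn R k S M → StepsIn R j M T →
      StepsIn R (k + j) S T
  | 0, j, S, M, T, h1, h2 => by cases h1; simpa [Nat.zero_add] using h2
  | k+1, j, S, M, T, ⟨M', hs, hr⟩, h2 => by
      have : (k + 1 + j) = (k + j) + 1 := by omega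
      rw [this]
      exact ⟨M', hs, StepsIn.trans hr h2⟩

lemma DRStep.cons_lift {c : α} {X Y : List α} (h : DRStep X Y) :
    DRStep (c :: X) (c :: Y) := by
  cases h with
  | del U V d => exact DRStep.del (c :: U) V d
  | rep U V x y hxy => exact DRStep.rep (c :: U) V x y hxy

lemma StepsIn.cons_lift {c : α} :
    ∀ {k : ℕ} {X Y : List α}, StepsIn DRStep k X Y →
      StepsIn DRStep k (c :: X) (c :: Y)
  | 0, X, Y, h => by cases h; rfl
  | k+1, X, Y, ⟨M, hs, hr⟩ => ⟨c :: M, hs.cons_lift, StepsIn.cons_lift hr⟩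

lemma DRStep.append_lift {W : List α} {X Y : List α} (h : DRStep X Y) :
    DRStep (X ++ W) (Y ++ W) := by
  cases h with
  | del U V d =>
      have := DRStep.del U (V ++ W) d
      simpa [List.append_assoc] using this
  | rep U V x y hxy =>
      have := DRStep.rep U (V ++ W) x y hxy
      simpa [List.append_assoc] using this

lemma StepsIn.append_lift {W : List α} :
    ∀ {k : ℕ} {X Y : List α}, StepsIn DRStep k X Y →
      StepsIn DRStep k (X ++ W) (Y ++ W)
  | 0, X, Y, h => by cases h; rfl
  | k+1, X, Y, ⟨M, hs, hr⟩ => ⟨M ++ W, hs.append_lift, StepsIn.append_lift hr⟩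

/-- Deleting down to a sublist. -/
lemma steps_of_sublist {s S : List α} (h : s.Sublist S) :
    StepsIn DRStep (S.length - s.length) S s := by
  induction h with
  | slnil => rfl
  | @cons l₁ l₂ a h ih =>
      have hlen : l₁.length ≤ l₂.length := h.length_le
      have : (a :: l₂).length - l₁.length = (l₂.length - l₁.length) + 1 := by
        simp only [List.length_cons]; omega
      rw [this]
      refine ⟨l₂, ?_, ih⟩
      have := DRStep.del ([] : List α) l₂ a
      simpa using this
  | @cons_cons l₁ l₂ a h ih =>
      have : (a :: l₂).length - (a :: l₁).length = l₂.length - l₁.length := by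
        simp only [List.length_cons]; omega
      rw [this]
      exact ih.cons_lift

/-- Replacing mismatches. -/
lemma steps_of_ham : ∀ (s t : List α), s.length = t.length →
    StepsIn DRStep (ham s t) s t
  | [], [], _ => rfl
  | [], b::t, h => by simp at h
  | a::s, [], h => by simp at h
  | a::s, b::t, h => by
      have ih := steps_of_ham s t (by simpa using h)
      by_cases hab : a = b
      · subst hab
        simpa [ham] using ih.cons_lift (c := a)
      · simp only [ham, if_neg hab]
        rw [Nat.add_comm]
        refine ⟨b :: s, ?_, ih.cons_lift⟩
        have := DRStep.rep ([] : List α) s a b hab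
        simpa using this

lemma dDR_le_of_steps {S T : List α} {k : ℕ} (h : StepsIn DRStep k S T) :
    dDR S T ≤ (k : ℕ∞) :=
  sInf_le ⟨k, h, rfl⟩

lemma dDR_le_align {s S T : List α} (hs : s.Sublist S) (hlen : s.length = T.length) :
    dDR S T ≤ ((S.length - T.length + ham s T : ℕ) : ℕ∞) := by
  have h1 : StepsIn DRStep (S.length - T.length) S s := by
    have := steps_of_sublist hs
    rwa [hlen] at this
  exact dDR_le_of_steps (h1.trans (steps_of_ham s T hlen))

/-- From an edit sequence, extract an alignment. -/
lemma align_of_steps : ∀ (k : ℕ) (S T : List α), StepsIn DRStep k S T →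
    ∃ s : List α, s.Sublist S ∧ s.length = T.length ∧
      S.length - T.length + ham s T ≤ k
  | 0, S, T, h => by
      have h' : S = T := h
      subst h'
      exact ⟨S, List.Sublist.refl S, rfl, by simp [ham_self]⟩
  | k+1, S, T, ⟨M, hs, hr⟩ => by
      obtain ⟨s, hsub, hlen, hcost⟩ := align_of_steps k M T hr
      cases hs with
      | del U V c =>
          refine ⟨s, ?_, hlen, ?_⟩
          · exact hsub.trans (by
              have : (U ++ V).Sublist (U ++ [c] ++ V) := by
                rw [List.append_assoc]
                exact (List.sublist_cons_self c V).append_left U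
              exact this)
          · have hTM : T.length ≤ (U ++ V).length := hlen ▸ hsub.length_le
            have : (U ++ [c] ++ V).length = (U ++ V).length + 1 := by simp; omega
            rw [this]
            omega
      | rep U V c d hcd =>
          have hsub' : s.Sublist (U ++ (d :: V)) := by
            simpa [List.append_assoc] using hsub
          rcases List.sublist_append_iff.mp hsub' with ⟨s₁, s₂', rfl, h₁, h₂'⟩
          rcases List.sublist_cons_iff.mp h₂' with h₂ | ⟨r, rfl, hr₂⟩
          · -- s doesn't use the replaced character
            refine ⟨s₁ ++ s₂', ?_, hlen, ?_⟩
            · exact (h₁.append h₂).trans (by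
                rw [List.append_assoc]
                exact (List.sublist_cons_self c V).append_left U)
            · have : (U ++ [c] ++ V).length = (U ++ [d] ++ V).length := by simp
              omega
          · -- s uses the replaced character d; swap back to c
            refine ⟨s₁ ++ c :: r, ?_, ?_, ?_⟩
            · have : (s₁ ++ c :: r).Sublist (U ++ c :: V) :=
                h₁.append (hr₂.cons₂ c)
              simpa [List.append_assoc] using this
            · simpa using hlen
            · have hlen2 : (U ++ [c] ++ V).length = (U ++ [d] ++ V).length := by simp
              have hham := ham_rep_le s₁ T r c d
              omega

/-- If there is any path, the infimum is attained. -/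
lemma dDR_spec (S T : List α) :
    dDR S T = ⊤ ∨ ∃ k : ℕ, StepsIn DRStep k S T ∧ dDR S T = (k : ℕ∞) := by
  by_cases hne : ∃ k : ℕ, StepsIn DRStep k S T
  · right
    set B := {k : ℕ | StepsIn DRStep k S T}
    have hB : B.Nonempty := hne
    have hmem := Nat.sInf_mem hB
    refine ⟨sInf B, hmem, le_antisymm (dDR_le_of_steps hmem) ?_⟩
    apply le_sInf
    rintro n ⟨j, hj, rfl⟩
    exact_mod_cast Nat.sInf_le hj
  · left
    unfold dDR
    suffices hE : {n : ℕ∞ | ∃ k : ℕ, StepsIn DRStep k S T ∧ n = k} = ∅ by rw [hE]; exact sInf_empty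
    ext n
    simp only [Set.mem_setOf_eq, Set.mem_empty_iff_false, iff_false]
    rintro ⟨k, hk, rfl⟩
    exact hne ⟨k, hk⟩

end Aux

theorem dDR_append_not_mem {α : Type*} [DecidableEq α] (S T : List α) (a b : α)
    (hab : a ≠ b) (hbS : b ∉ S) :
    dDR (S ++ [a]) (T ++ [b]) = 1 + dDR S T := by
  apply le_antisymm
  · -- ≤ : simulate a path for (S, T) plus one replacement
    rcases dDR_spec S T with h | ⟨k, hk, h⟩
    · rw [h]; simp
    · have step1 : DRStep (S ++ [a]) (S ++ [b]) := by
        have := DRStep.rep S ([] : List α) a b hab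
        simpa using this
      have rest : StepsIn DRStep k (S ++ [b]) (T ++ [b]) := hk.append_lift
      have : StepsIn DRStep (k + 1) (S ++ [a]) (T ++ [b]) := ⟨S ++ [b], step1, rest⟩
      calc dDR (S ++ [a]) (T ++ [b]) ≤ ((k + 1 : ℕ) : ℕ∞) := dDR_le_of_steps this
        _ = 1 + dDR S T := by rw [h]; push_cast; ring
  · -- ≥ : every path for the big pair yields an alignment with last-position mismatch
    apply le_sInf
    rintro n ⟨k, hk, rfl⟩
    obtain ⟨s, hsub, hlen, hcost⟩ := align_of_steps k _ _ hk
    rcases List.sublist_append_iff.mp hsub with ⟨u, v, rfl, hu, hv⟩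
    have hlenST : (S ++ [a]).length - (T ++ [b]).length = S.length - T.length := by
      simp
    rcases List.sublist_singleton.mp hv with rfl | rfl
    · -- v = [] : u <+ S has length T.length + 1, drop its last element
      rw [List.append_nil] at hsub hlen hcost
      have hune : u ≠ [] := by
        intro h
        rw [h] at hlen
        simp at hlen
      set x := u.getLast hune with hx
      have hu' : u.dropLast ++ [x] = u := List.dropLast_append_getLast hune
      have hxS : x ∈ S := hu.mem (u.getLast_mem hune)
      have hxb : x ≠ b := fun h => hbS (h ▸ hxS)
      have hdl : u.dropLast.Sublist S := (List.dropLast_sublist u).trans hu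
      have hdlen : u.dropLast.length = T.length := by
        have := u.length_dropLast
        simp at hlen
        omega
      have hham : ham u (T ++ [b]) = ham u.dropLast T + 1 := by
        conv_lhs => rw [← hu']
        rw [ham_append_singleton _ _ hdlen, if_neg hxb]
      have hle : dDR S T ≤ ((S.length - T.length + ham u.dropLast T : ℕ) : ℕ∞) :=
        dDR_le_align hdl hdlen
      have hk' : S.length - T.length + ham u.dropLast T + 1 ≤ k := by
        rw [hlenST, hham] at hcost
        omega
      calc 1 + dDR S T ≤ 1 + ((S.length - T.length + ham u.dropLast T : ℕ) : ℕ∞) := by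
            exact add_le_add (le_refl 1) hle
        _ = ((S.length - T.length + ham u.dropLast T + 1 : ℕ) : ℕ∞) := by push_cast; ring
        _ ≤ (k : ℕ∞) := by exact_mod_cast hk'
    · -- v = [a]
      have hulen : u.length = T.length := by simpa using hlen
      have hham : ham (u ++ [a]) (T ++ [b]) = ham u T + 1 := by
        rw [ham_append_singleton _ _ hulen, if_neg hab]
      have hle : dDR S T ≤ ((S.length - T.length + ham u T : ℕ) : ℕ∞) :=
        dDR_le_align hu hulen
      have hk' : S.length - T.length + ham u T + 1 ≤ k := by
        rw [hlenST, hham] at hcost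
        omega
      calc 1 + dDR S T ≤ 1 + ((S.length - T.length + ham u T : ℕ) : ℕ∞) := by
            exact add_le_add (le_refl 1) hle
        _ = ((S.length - T.length + ham u T + 1 : ℕ) : ℕ∞) := by push_cast; ring
        _ ≤ (k : ℕ∞) := by exact_mod_cast hk'
end
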